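/- Let N ≥ 1, let H₀, H₁, …, H_m be Hermitian N×N complex matrices, let L₁, …, L_p be N×N complex matrices, and let u₁, …, u_m : ℝ → ℝ be continuous control functions. Suppose ρ : ℝ → (N×N complex matrices) is differentiable and satisfies, for all t, the controlled GKLS equation ρ'(t) = −i·(H(t)·ρ(t) − ρ(t)·H(t)) + Σ_k ( L_k·ρ(t)·L_k† − (1/2)·L_k†·L_k·ρ(t) − (1/2)·ρ(t)·L_k†·L_k ), where H(t) = H₀ + Σ_j u_j(t)·H_j. If ρ(0) is positive definite, then ρ(t) is positive definite for every t ≥ 0. (Consequently, no singular density matrix — i.e., no point of the boundary of the set of states — can be reached in finite time from the interior by coherent control.) -/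

import Mathlib

set_option maxHeartbeats 1000000

open ComplexOrder Matrix

attribute [local instance] Matrix.normedAddCommGroup Matrix.normedSpace

namespace GKLSAux
variable {N p : ℕ}

lemma norm_mul_le' (A B : Matrix (Fin N) (Fin N) ℂ) : ‖A * B‖ ≤ N * ‖A‖ * ‖B‖ := by
  rcases Nat.eq_zero_or_pos N with h | h
  · subst h
    simp [Matrix.norm_le_iff le_rfl]
  have h0 : (0:ℝ) ≤ N * ‖A‖ * ‖B‖ :=
    mul_nonneg (mul_nonneg (by positivity) (norm_nonneg A)) (norm_nonneg B)
  rw [Matrix.norm_le_iff h0]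
  intro i j
  rw [Matrix.mul_apply]
  calc ‖∑ k, A i k * B k j‖ ≤ ∑ k, ‖A i k * B k j‖ := norm_sum_le _ _
    _ ≤ ∑ _k : Fin N, ‖A‖ * ‖B‖ := by
        refine Finset.sum_le_sum fun k _ => ?_
        rw [norm_mul]
        exact mul_le_mul (norm_entry_le_entrywise_sup_norm A)
          (norm_entry_le_entrywise_sup_norm B) (norm_nonneg _) (norm_nonneg _)
    _ = N * ‖A‖ * ‖B‖ := by simp [mul_assoc]

/-- conjugate transpose as an ℝ-linear map -/
noncomputable def ctCLM (N : ℕ) : Matrix (Fin N) (Fin N) ℂ →L[ℝ] Matrix (Fin N) (Fin N) ℂ :=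
  LinearMap.toContinuousLinearMap
    { toFun := fun A => Aᴴ
      map_add' := fun A B => conjTranspose_add A B
      map_smul' := fun c A => by
        simp [conjTranspose_smul] }

lemma hasDerivAt_conjTranspose {ρ : ℝ → Matrix (Fin N) (Fin N) ℂ}
    {ρ' : Matrix (Fin N) (Fin N) ℂ} {t : ℝ} (h : HasDerivAt ρ ρ' t) :
    HasDerivAt (fun s => (ρ s)ᴴ) ρ'ᴴ t := by
  have := ((ctCLM N).hasFDerivAt (x := ρ t)).comp_hasDerivAt t h
  exact this

/-- The GKLS generator. -/
noncomputable def F (Hm : Matrix (Fin N) (Fin N) ℂ) (L : Fin p → Matrix (Fin N) (Fin N) ℂ)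
    (X : Matrix (Fin N) (Fin N) ℂ) : Matrix (Fin N) (Fin N) ℂ :=
  -Complex.I • (Hm * X - X * Hm) +
    ∑ k, (L k * X * (L k)ᴴ - (1 / 2 : ℂ) • ((L k)ᴴ * L k * X) -
      (1 / 2 : ℂ) • (X * ((L k)ᴴ * L k)))

lemma star_half : star (1 / 2 : ℂ) = (1 / 2 : ℂ) := by
  simp [Complex.ext_iff]

lemma F_conjTranspose {Hm : Matrix (Fin N) (Fin N) ℂ} (hHm : Hmᴴ = Hm)
    (L : Fin p → Matrix (Fin N) (Fin N) ℂ) (X : Matrix (Fin N) (Fin N) ℂ) :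
    (F Hm L X)ᴴ = F Hm L Xᴴ := by
  unfold F
  rw [conjTranspose_add]
  congr 1
  · rw [conjTranspose_smul, conjTranspose_sub, conjTranspose_mul, conjTranspose_mul, hHm,
      show star (-Complex.I) = Complex.I by simp, neg_smul, ← smul_neg, neg_sub]
  · rw [conjTranspose_sum]
    refine Finset.sum_congr rfl fun k _ => ?_
    simp only [conjTranspose_sub, conjTranspose_smul, conjTranspose_mul,
      conjTranspose_conjTranspose, Matrix.mul_assoc, star_half]
    abel

lemma F_sub (Hm : Matrix (Fin N) (Fin N) ℂ) (L : Fin p → Matrix (Fin N) (Fin N) ℂ)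
    (X Y : Matrix (Fin N) (Fin N) ℂ) :
    F Hm L (X - Y) = F Hm L X - F Hm L Y := by
  unfold F
  simp only [Matrix.mul_sub, Matrix.sub_mul, smul_sub, Finset.sum_sub_distrib]
  abel

lemma norm_F_le (Hm : Matrix (Fin N) (Fin N) ℂ) (L : Fin p → Matrix (Fin N) (Fin N) ℂ)
    (X : Matrix (Fin N) (Fin N) ℂ) :
    ‖F Hm L X‖ ≤ (2*N*‖Hm‖ + ∑ k, ((N:ℝ)^2*‖L k‖^2 + N*‖(L k)ᴴ * L k‖)) * ‖X‖ := by
  have hX := norm_nonneg X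
  have hN : (0:ℝ) ≤ N := Nat.cast_nonneg N
  have h1 : ‖-Complex.I • (Hm * X - X * Hm)‖ ≤ 2*N*‖Hm‖*‖X‖ := by
    rw [norm_smul, show ‖(-Complex.I)‖ = 1 by simp, one_mul]
    calc ‖Hm * X - X * Hm‖ ≤ ‖Hm * X‖ + ‖X * Hm‖ := norm_sub_le _ _
      _ ≤ (N:ℝ)*‖Hm‖*‖X‖ + N*‖X‖*‖Hm‖ := add_le_add (norm_mul_le' _ _) (norm_mul_le' _ _)
      _ = 2*N*‖Hm‖*‖X‖ := by ring
  have h2 : ∀ k, ‖L k * X * (L k)ᴴ - (1/2:ℂ) • ((L k)ᴴ * L k * X) -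
      (1/2:ℂ) • (X * ((L k)ᴴ * L k))‖ ≤ ((N:ℝ)^2*‖L k‖^2 + N*‖(L k)ᴴ * L k‖) * ‖X‖ := by
    intro k
    have hhalf : ‖(1/2:ℂ)‖ = 1/2 := by norm_num
    have ha : ‖L k * X * (L k)ᴴ‖ ≤ (N:ℝ)^2*‖L k‖^2*‖X‖ := by
      calc ‖L k * X * (L k)ᴴ‖ ≤ (N:ℝ) * ‖L k * X‖ * ‖(L k)ᴴ‖ := norm_mul_le' _ _
        _ ≤ (N:ℝ) * ((N:ℝ) * ‖L k‖ * ‖X‖) * ‖L k‖ := by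
            rw [norm_conjTranspose]
            exact mul_le_mul_of_nonneg_right
              (mul_le_mul_of_nonneg_left (norm_mul_le' _ _) hN) (norm_nonneg _)
        _ = (N:ℝ)^2*‖L k‖^2*‖X‖ := by ring
    have hb : ‖(1/2:ℂ) • ((L k)ᴴ * L k * X)‖ ≤ ((N:ℝ) * ‖(L k)ᴴ * L k‖ * ‖X‖)/2 := by
      rw [norm_smul, hhalf]
      have := norm_mul_le' ((L k)ᴴ * L k) X
      linarith
    have hc : ‖(1/2:ℂ) • (X * ((L k)ᴴ * L k))‖ ≤ ((N:ℝ) * ‖(L k)ᴴ * L k‖ * ‖X‖)/2 := by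
      rw [norm_smul, hhalf]
      have := norm_mul_le' X ((L k)ᴴ * L k)
      have h' : (N:ℝ) * ‖X‖ * ‖(L k)ᴴ * L k‖ = (N:ℝ) * ‖(L k)ᴴ * L k‖ * ‖X‖ := by ring
      linarith [h' ▸ norm_mul_le' X ((L k)ᴴ * L k)]
    calc ‖L k * X * (L k)ᴴ - (1/2:ℂ) • ((L k)ᴴ * L k * X) - (1/2:ℂ) • (X * ((L k)ᴴ * L k))‖
        ≤ ‖L k * X * (L k)ᴴ - (1/2:ℂ) • ((L k)ᴴ * L k * X)‖ +
          ‖(1/2:ℂ) • (X * ((L k)ᴴ * L k))‖ := norm_sub_le _ _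
      _ ≤ ‖L k * X * (L k)ᴴ‖ + ‖(1/2:ℂ) • ((L k)ᴴ * L k * X)‖ +
          ‖(1/2:ℂ) • (X * ((L k)ᴴ * L k))‖ := by
            have := norm_sub_le (L k * X * (L k)ᴴ) ((1/2:ℂ) • ((L k)ᴴ * L k * X))
            linarith
      _ ≤ ((N:ℝ)^2*‖L k‖^2 + N*‖(L k)ᴴ * L k‖) * ‖X‖ := by
            rw [add_mul]
            have : (N:ℝ)*‖(L k)ᴴ * L k‖*‖X‖ =
              ((N:ℝ) * ‖(L k)ᴴ * L k‖ * ‖X‖)/2 + ((N:ℝ) * ‖(L k)ᴴ * L k‖ * ‖X‖)/2 := by ring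
            linarith
  calc ‖F Hm L X‖ ≤ ‖-Complex.I • (Hm * X - X * Hm)‖ +
        ‖∑ k, (L k * X * (L k)ᴴ - (1/2:ℂ) • ((L k)ᴴ * L k * X) -
          (1/2:ℂ) • (X * ((L k)ᴴ * L k)))‖ := norm_add_le _ _
    _ ≤ 2*N*‖Hm‖*‖X‖ + ∑ k, ((N:ℝ)^2*‖L k‖^2 + N*‖(L k)ᴴ * L k‖) * ‖X‖ := by
        refine add_le_add h1 ((norm_sum_le _ _).trans (Finset.sum_le_sum fun k _ => h2 k))
    _ = (2*N*‖Hm‖ + ∑ k, ((N:ℝ)^2*‖L k‖^2 + N*‖(L k)ᴴ * L k‖)) * ‖X‖ := by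
        rw [add_mul, Finset.sum_mul]

lemma isHermitian_of_ode {m : ℕ} {H₀ : Matrix (Fin N) (Fin N) ℂ} (hH₀ : H₀.IsHermitian)
    {Hc : Fin m → Matrix (Fin N) (Fin N) ℂ} (hHc : ∀ j, (Hc j).IsHermitian)
    (L : Fin p → Matrix (Fin N) (Fin N) ℂ)
    {u : Fin m → ℝ → ℝ} (hu : ∀ j, Continuous (u j))
    {ρ : ℝ → Matrix (Fin N) (Fin N) ℂ}
    (hode : ∀ t, HasDerivAt ρ (F (H₀ + ∑ j, (u j t : ℂ) • Hc j) L (ρ t)) t)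
    (h0 : (ρ 0).IsHermitian) : ∀ t, 0 ≤ t → (ρ t)ᴴ = ρ t := by
  intro T hT
  set Hf : ℝ → Matrix (Fin N) (Fin N) ℂ := fun t => H₀ + ∑ j, (u j t : ℂ) • Hc j with hHfdef
  have hHf : ∀ t, (Hf t)ᴴ = Hf t := by
    intro t
    simp only [Hf, conjTranspose_add, conjTranspose_sum, conjTranspose_smul, hH₀.eq]
    congr 1
    refine Finset.sum_congr rfl fun j _ => ?_
    rw [(hHc j).eq, Complex.star_def, Complex.conj_ofReal]
  set δ : ℝ → Matrix (Fin N) (Fin N) ℂ := fun t => ρ t - (ρ t)ᴴ with hδdef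
  have hδ : ∀ t, HasDerivAt δ (F (Hf t) L (δ t)) t := by
    intro t
    have h1 := hode t
    have h2 := hasDerivAt_conjTranspose h1
    rw [F_conjTranspose (hHf t)] at h2
    have h3 := h1.sub h2
    rwa [← F_sub] at h3
  choose C hC using fun j =>
    (isCompact_Icc (a := (0:ℝ)) (b := T)).exists_bound_of_continuousOn (hu j).continuousOn
  set K : ℝ := 2*N*(‖H₀‖ + ∑ j, C j * ‖Hc j‖) +
    ∑ k, ((N:ℝ)^2*‖L k‖^2 + N*‖(L k)ᴴ * L k‖) with hKdef
  have hKbound : ∀ t ∈ Set.Icc (0:ℝ) T, ∀ X, ‖F (Hf t) L X‖ ≤ K * ‖X‖ := by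
    intro t ht X
    refine (norm_F_le _ _ _).trans ?_
    have hH : ‖Hf t‖ ≤ ‖H₀‖ + ∑ j, C j * ‖Hc j‖ := by
      refine (norm_add_le _ _).trans (add_le_add le_rfl ?_)
      refine (norm_sum_le _ _).trans (Finset.sum_le_sum fun j _ => ?_)
      rw [norm_smul, Complex.norm_real]
      exact mul_le_mul_of_nonneg_right (hC j t ht) (norm_nonneg _)
    have h2N : (0:ℝ) ≤ 2*N := by positivity
    have := mul_le_mul_of_nonneg_left hH h2N
    exact mul_le_mul_of_nonneg_right (by linarith) (norm_nonneg X)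
  have key := norm_le_gronwallBound_of_norm_deriv_right_le (δ := 0) (K := K) (ε := 0)
    (a := 0) (b := T) (f := δ) (f' := fun t => F (Hf t) L (δ t))
    (fun t _ => (hδ t).continuousAt.continuousWithinAt)
    (fun x _ => (hδ x).hasDerivWithinAt)
    (by simp [hδdef, h0.eq])
    (fun x hx => by
      simpa using hKbound x (Set.Ico_subset_Icc_self hx) (δ x))
  have h4 := key T (Set.right_mem_Icc.mpr hT)
  rw [gronwallBound_ε0_δ0] at h4
  have h5 : δ T = 0 := by
    have := norm_nonneg (δ T)
    have h6 : ‖δ T‖ = 0 := le_antisymm h4 this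
    exact norm_eq_zero.mp h6
  have := sub_eq_zero.mp h5
  exact this.symm

/-- determinant as a continuous multilinear map in the rows -/
noncomputable def detL (N : ℕ) :
    ContinuousMultilinearMap ℂ (fun _ : Fin N => (Fin N → ℂ)) ℂ :=
  MultilinearMap.mkContinuous
    (Matrix.detRowAlternating (R := ℂ) (n := Fin N)).toMultilinearMap (Nat.factorial N : ℝ)
    (by
      intro M
      have hdet : Matrix.detRowAlternating (R := ℂ) (n := Fin N) M = Matrix.det M := rfl
      show ‖Matrix.det (Matrix.of M)‖ ≤ _
      rw [Matrix.det_apply']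
      refine (norm_sum_le _ _).trans ?_
      have hterm : ∀ σ : Equiv.Perm (Fin N),
          ‖((Equiv.Perm.sign σ : ℤ) : ℂ) * ∏ i, M (σ i) i‖ ≤ ∏ i, ‖M i‖ := by
        intro σ
        rw [norm_mul]
        have h1 : ‖((Equiv.Perm.sign σ : ℤ) : ℂ)‖ = 1 := by
          rcases Int.units_eq_one_or (Equiv.Perm.sign σ) with h | h <;> rw [h] <;> simp
        rw [h1, one_mul]
        calc ‖∏ i, M (σ i) i‖ ≤ ∏ i, ‖M (σ i) i‖ := (norm_prod Finset.univ (fun i => M (σ i) i)).le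
          _ ≤ ∏ i, ‖M (σ i)‖ :=
              Finset.prod_le_prod (fun i _ => norm_nonneg _)
                (fun i _ => norm_le_pi_norm (M (σ i)) i)
          _ = ∏ i, ‖M i‖ := Equiv.prod_comp σ (fun i => ‖M i‖)
      calc (∑ σ : Equiv.Perm (Fin N), ‖((Equiv.Perm.sign σ : ℤ) : ℂ) * ∏ i, M (σ i) i‖)
          ≤ ∑ _σ : Equiv.Perm (Fin N), ∏ i, ‖M i‖ :=
            Finset.sum_le_sum fun σ _ => hterm σ
        _ = (Nat.factorial N : ℝ) * ∏ i, ‖M i‖ := by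
            rw [Finset.sum_const, Finset.card_univ, Fintype.card_perm, Fintype.card_fin,
              nsmul_eq_mul]
      )

lemma detL_apply (M : Matrix (Fin N) (Fin N) ℂ) : detL N M = M.det := by
  rw [detL, MultilinearMap.coe_mkContinuous]
  rfl

lemma hasDerivAt_det {ρ : ℝ → Matrix (Fin N) (Fin N) ℂ}
    {ρ' : Matrix (Fin N) (Fin N) ℂ} {t : ℝ} (h : HasDerivAt ρ ρ' t) :
    HasDerivAt (fun s => (ρ s).det) (∑ i, (updateRow (ρ t) i (ρ' i)).det) t := by
  have hd : HasFDerivAt (detL N) ((detL N).linearDeriv (ρ t)) (ρ t) :=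
    ContinuousMultilinearMap.hasFDerivAt _ _
  have h2 := (hd.restrictScalars ℝ).comp_hasDerivAt t h
  have h3 : (((detL N).linearDeriv (ρ t)).restrictScalars ℝ) ρ' =
      ∑ i, (updateRow (ρ t) i (ρ' i)).det := by
    rw [ContinuousLinearMap.coe_restrictScalars']
    erw [ContinuousMultilinearMap.linearDeriv_apply]
    refine Finset.sum_congr rfl fun i _ => ?_
    erw [detL_apply]
    rfl
  rw [h3] at h2
  have h4 : (⇑(detL N) ∘ ρ) = fun s => (ρ s).det := funext fun s => detL_apply _
  rw [h4] at h2
  exact h2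

lemma sum_det_updateRow (A B : Matrix (Fin N) (Fin N) ℂ) (hA : IsUnit A.det) :
    ∑ i, (updateRow A i (B i)).det = (B * A⁻¹).trace * A.det := by
  have hBA : (B * A⁻¹) * A = B := by
    rw [Matrix.mul_assoc, Matrix.nonsing_inv_mul A hA, Matrix.mul_one]
  have hrow : ∀ i, B i = ∑ k, (B * A⁻¹) i k • A k := by
    intro i
    conv_lhs => rw [← hBA]
    funext j
    simp [Matrix.mul_apply, Finset.sum_apply]
  calc ∑ i, (updateRow A i (B i)).det = ∑ i, (B * A⁻¹) i i • A.det := by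
        refine Finset.sum_congr rfl fun i _ => ?_
        rw [hrow i, det_updateRow_sum]
    _ = (B * A⁻¹).trace * A.det := by
        rw [Matrix.trace, Finset.sum_mul]
        simp [Matrix.diag, smul_eq_mul]

lemma trace_nonneg_of_posSemidef {D : Matrix (Fin N) (Fin N) ℂ} (hD : D.PosSemidef) :
    0 ≤ D.trace := by
  rw [Matrix.trace]
  refine Finset.sum_nonneg fun i _ => ?_
  have h := hD.dotProduct_mulVec_nonneg (Pi.single i 1)
  simpa [dotProduct, Matrix.mulVec, Pi.single_apply, Finset.mul_sum] using h

lemma re_trace_F_mul_inv {Hm : Matrix (Fin N) (Fin N) ℂ}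
    (L : Fin p → Matrix (Fin N) (Fin N) ℂ) {R : Matrix (Fin N) (Fin N) ℂ} (hR : R.PosDef) :
    -(∑ k, ((L k)ᴴ * L k).trace.re) ≤ ((F Hm L R * R⁻¹).trace).re := by
  have hdet : IsUnit R.det := isUnit_iff_ne_zero.mpr hR.det_pos.ne'
  have hinv : R * R⁻¹ = 1 := Matrix.mul_nonsing_inv R hdet
  have hinv' : R⁻¹ * R = 1 := Matrix.nonsing_inv_mul R hdet
  -- square root
  obtain ⟨S, hS_psd, hSS⟩ : ∃ S : Matrix (Fin N) (Fin N) ℂ, S.PosSemidef ∧ S * S = R :=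
    by open scoped MatrixOrder in exact ⟨CFC.sqrt R, (CFC.sqrt_nonneg R).posSemidef, CFC.sqrt_mul_sqrt_self R hR.posSemidef.nonneg⟩
  have hScT : Sᴴ = S := hS_psd.isHermitian
  -- trace of the commutator part vanishes
  have t1 : ((Hm * R - R * Hm) * R⁻¹).trace = 0 := by
    rw [Matrix.sub_mul, trace_sub, Matrix.mul_assoc, hinv, Matrix.mul_one,
      trace_mul_comm, ← Matrix.mul_assoc, hinv', Matrix.one_mul, sub_self]
  -- dissipator main terms are PSD
  have t2 : ∀ k, 0 ≤ ((L k * R * (L k)ᴴ * R⁻¹).trace).re := by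
    intro k
    have he : L k * R * (L k)ᴴ * R⁻¹ = (L k * S) * ((L k * S)ᴴ * R⁻¹) := by
      rw [conjTranspose_mul, hScT, ← hSS]
      noncomm_ring
    have hpsd : ((L k * S)ᴴ * R⁻¹ * (L k * S)).PosSemidef :=
      hR.inv.posSemidef.conjTranspose_mul_mul_same (L k * S)
    have htr : (L k * R * (L k)ᴴ * R⁻¹).trace = ((L k * S)ᴴ * R⁻¹ * (L k * S)).trace := by
      rw [he, trace_mul_comm, Matrix.mul_assoc]
    rw [htr]
    exact (Complex.le_def.mp (trace_nonneg_of_posSemidef hpsd)).1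
  -- the two halves of the dissipator
  have t3 : ∀ k, (((1/2:ℂ) • ((L k)ᴴ * L k * R)) * R⁻¹).trace
      = (1/2:ℂ) * ((L k)ᴴ * L k).trace := by
    intro k
    rw [Matrix.smul_mul, trace_smul, Matrix.mul_assoc, hinv, Matrix.mul_one, smul_eq_mul]
  have t4 : ∀ k, (((1/2:ℂ) • (R * ((L k)ᴴ * L k))) * R⁻¹).trace
      = (1/2:ℂ) * ((L k)ᴴ * L k).trace := by
    intro k
    rw [Matrix.smul_mul, trace_smul, trace_mul_comm, ← Matrix.mul_assoc, hinv',
      Matrix.one_mul, smul_eq_mul]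
  have expand : (F Hm L R * R⁻¹).trace =
      ∑ k, ((L k * R * (L k)ᴴ * R⁻¹).trace - ((L k)ᴴ * L k).trace) := by
    unfold F
    rw [Matrix.add_mul, trace_add, Matrix.smul_mul, trace_smul, t1, smul_zero, zero_add,
      Finset.sum_mul, trace_sum]
    refine Finset.sum_congr rfl fun k _ => ?_
    rw [Matrix.sub_mul, Matrix.sub_mul, trace_sub, trace_sub, t3, t4]
    ring
  rw [expand]
  rw [Complex.re_sum]
  have : ∀ k ∈ Finset.univ (α := Fin p),
      -(((L k)ᴴ * L k).trace.re) ≤ ((L k * R * (L k)ᴴ * R⁻¹).trace - ((L k)ᴴ * L k).trace).re := by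
    intro k _
    rw [Complex.sub_re]
    have := t2 k
    linarith
  calc -(∑ k, ((L k)ᴴ * L k).trace.re) = ∑ k, -(((L k)ᴴ * L k).trace.re) := by
        rw [Finset.sum_neg_distrib]
    _ ≤ _ := Finset.sum_le_sum this

lemma quad_bound (A : Matrix (Fin N) (Fin N) ℂ) (v : Fin N → ℂ) :
    ‖star v ⬝ᵥ A *ᵥ v‖ ≤ ‖A‖ * (∑ i, ‖v i‖) ^ 2 := by
  rw [dotProduct]
  refine (norm_sum_le _ _).trans ?_
  have hterm : ∀ i, ‖star v i * (A *ᵥ v) i‖ ≤ ‖v i‖ * (‖A‖ * ∑ j, ‖v j‖) := by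
    intro i
    rw [norm_mul]
    refine mul_le_mul (le_of_eq (by simp)) ?_ (norm_nonneg _) (norm_nonneg _)
    rw [Matrix.mulVec, dotProduct]
    refine (norm_sum_le _ _).trans ?_
    rw [Finset.mul_sum]
    refine Finset.sum_le_sum fun j _ => ?_
    rw [norm_mul]
    exact mul_le_mul_of_nonneg_right (norm_entry_le_entrywise_sup_norm A) (norm_nonneg _)
  refine (Finset.sum_le_sum fun i _ => hterm i).trans ?_
  rw [← Finset.sum_mul]
  ring_nf
  exact le_refl _

lemma quad_im_eq_zero {A : Matrix (Fin N) (Fin N) ℂ} (hA : Aᴴ = A) (x : Fin N → ℂ) :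
    (star x ⬝ᵥ A *ᵥ x).im = 0 := by
  rw [← Complex.conj_eq_iff_im]
  have h1 : (starRingEnd ℂ) (star x ⬝ᵥ A *ᵥ x) = star (star x ⬝ᵥ A *ᵥ x) := rfl
  rw [h1]
  have h2 : star (star x ⬝ᵥ A *ᵥ x) = star (A *ᵥ x) ⬝ᵥ x := by
    rw [Matrix.star_dotProduct]
    simp
  rw [h2, Matrix.star_mulVec, ← Matrix.dotProduct_mulVec, hA]

lemma quad_smul (A : Matrix (Fin N) (Fin N) ℂ) (x : Fin N → ℂ) (r : ℝ) :
    star ((r:ℂ) • x) ⬝ᵥ A *ᵥ ((r:ℂ) • x) = ((r:ℂ)^2) * (star x ⬝ᵥ A *ᵥ x) := by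
  rw [Matrix.mulVec_smul, dotProduct_smul]
  have : star ((r:ℂ) • x) = (r:ℂ) • star x := by
    rw [star_smul, Complex.star_def, Complex.conj_ofReal]
  rw [this, smul_dotProduct, smul_smul, smul_eq_mul]
  ring

lemma posDef_of_posSemidef_det_ne_zero {A : Matrix (Fin N) (Fin N) ℂ}
    (hA : A.PosSemidef) (hdet : A.det ≠ 0) : A.PosDef := by
  refine .of_dotProduct_mulVec_pos hA.isHermitian fun x hx => ?_
  rcases lt_or_eq_of_le (hA.dotProduct_mulVec_nonneg x) with h | h
  · exact h
  · exfalso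
    have h0 : A *ᵥ x = 0 := (hA.dotProduct_mulVec_zero_iff x).mp h.symm
    have hinj : Function.Injective A.mulVec :=
      Matrix.mulVec_injective_iff_isUnit.mpr
        (A.isUnit_iff_isUnit_det.mpr (isUnit_iff_ne_zero.mpr hdet))
    exact hx (hinj (by rw [h0, Matrix.mulVec_zero]))

lemma exists_posDef_nbhd {R : Matrix (Fin N) (Fin N) ℂ} (hR : R.PosDef) (hN : 1 ≤ N) :
    ∃ ε > 0, ∀ A : Matrix (Fin N) (Fin N) ℂ, Aᴴ = A → ‖A - R‖ < ε → A.PosDef := by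
  classical
  set s : Set (Fin N → ℂ) := {v | ∑ i, ‖v i‖ = 1} with hs
  have hφ : Continuous fun v : Fin N → ℂ => ∑ i, ‖v i‖ :=
    continuous_finset_sum _ fun i _ => (continuous_apply i).norm
  have hclosed : IsClosed s := isClosed_eq hφ continuous_const
  have hbdd : Bornology.IsBounded s := by
    refine (Metric.isBounded_iff_subset_closedBall 0).mpr ⟨1, fun v hv => ?_⟩
    simp only [Metric.mem_closedBall, dist_zero_right]
    rw [pi_norm_le_iff_of_nonneg zero_le_one]
    intro i
    calc ‖v i‖ ≤ ∑ j, ‖v j‖ := Finset.single_le_sum (fun j _ => norm_nonneg _) (Finset.mem_univ i)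
      _ = 1 := hv
  have hcomp : IsCompact s := Metric.isCompact_of_isClosed_isBounded hclosed hbdd
  have hne : s.Nonempty := by
    refine ⟨Pi.single ⟨0, hN⟩ 1, ?_⟩
    simp only [hs, Set.mem_setOf_eq, Pi.single_apply]
    rw [Finset.sum_eq_single ⟨0, hN⟩]
    · simp
    · intro b _ hb; simp [hb]
    · simp
  have hqcont : Continuous fun v : Fin N → ℂ => (star v ⬝ᵥ R *ᵥ v).re := by
    have : Continuous fun v : Fin N → ℂ => star v ⬝ᵥ R *ᵥ v := by
      have hrw : (fun v : Fin N → ℂ => star v ⬝ᵥ R *ᵥ v) =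
          fun v => ∑ i, ∑ j, (starRingEnd ℂ) (v i) * (R i j * v j) := by
        funext v
        simp [dotProduct, Matrix.mulVec, Finset.mul_sum]
      rw [hrw]
      refine continuous_finset_sum _ fun i _ => continuous_finset_sum _ fun j _ => ?_
      exact (Complex.continuous_conj.comp (continuous_apply i)).mul
        (continuous_const.mul (continuous_apply j))
    exact Complex.continuous_re.comp this
  obtain ⟨v₀, hv₀s, hmin⟩ := hcomp.exists_isMinOn hne hqcont.continuousOn
  set ε : ℝ := (star v₀ ⬝ᵥ R *ᵥ v₀).re with hε
  have hv₀ne : v₀ ≠ 0 := by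
    intro h
    rw [hs] at hv₀s
    simp [h] at hv₀s
  have hεpos : 0 < ε := by
    have := hR.re_dotProduct_pos hv₀ne
    simpa using this
  refine ⟨ε, hεpos, fun A hAH hAR => ?_⟩
  refine .of_dotProduct_mulVec_pos hAH fun x hx => ?_
  -- scale x to the ℓ¹ sphere
  set c : ℝ := ∑ i, ‖x i‖ with hc
  have hcpos : 0 < c := by
    rcases Function.ne_iff.mp hx with ⟨i, hi⟩
    have : 0 < ‖x i‖ := by simpa using hi
    calc (0:ℝ) < ‖x i‖ := this
      _ ≤ c := Finset.single_le_sum (fun j _ => norm_nonneg _) (Finset.mem_univ i)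
  set w : Fin N → ℂ := (c⁻¹ : ℂ) • x with hw
  have hws : w ∈ s := by
    rw [hs]
    simp only [Set.mem_setOf_eq, hw, Pi.smul_apply, smul_eq_mul, norm_mul]
    have hnc : ‖((c:ℂ))⁻¹‖ = c⁻¹ := by
      rw [norm_inv, Complex.norm_real, Real.norm_eq_abs, abs_of_pos hcpos]
    rw [hnc, ← Finset.mul_sum, ← hc, inv_mul_cancel₀ hcpos.ne']
  have hcC : ((c:ℂ)) ≠ 0 := by
    simpa using hcpos.ne'
  have hxw : x = (c:ℂ) • w := by
    rw [hw, smul_smul, mul_inv_cancel₀ hcC, one_smul]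
  have hquad : star x ⬝ᵥ A *ᵥ x = ((c:ℂ)^2) * (star w ⬝ᵥ A *ᵥ w) := by
    conv_lhs => rw [hxw]
    exact quad_smul A w c
  have hsplit : star w ⬝ᵥ A *ᵥ w = star w ⬝ᵥ R *ᵥ w + star w ⬝ᵥ (A - R) *ᵥ w := by
    rw [Matrix.sub_mulVec, dotProduct_sub]
    ring
  have h1 : ε ≤ (star w ⬝ᵥ R *ᵥ w).re := hmin hws
  have h2 : |(star w ⬝ᵥ (A - R) *ᵥ w).re| ≤ ‖A - R‖ := by
    refine (Complex.abs_re_le_norm _).trans ?_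
    have := quad_bound (A - R) w
    have hws1 : (∑ i, ‖w i‖) = 1 := hws
    rw [hws1] at this
    simpa using this
  have hrepos : 0 < (star w ⬝ᵥ A *ᵥ w).re := by
    rw [hsplit, Complex.add_re]
    have := abs_le.mp h2
    linarith
  rw [Complex.lt_def]
  constructor
  · rw [Complex.zero_re, hquad]
    have : ((c:ℂ)^2) = (((c^2 : ℝ)) : ℂ) := by push_cast; ring
    rw [this, Complex.re_ofReal_mul]
    exact mul_pos (pow_pos hcpos 2) hrepos
  · rw [Complex.zero_im, quad_im_eq_zero hAH]

lemma hasDerivAt_re {g : ℝ → ℂ} {d : ℂ} {t : ℝ} (h : HasDerivAt g d t) :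
    HasDerivAt (fun s => (g s).re) d.re t := by
  have := (Complex.reCLM.hasFDerivAt (x := g t)).comp_hasDerivAt t h
  exact this

lemma quad_continuous (x : Fin N → ℂ) :
    Continuous fun A : Matrix (Fin N) (Fin N) ℂ => star x ⬝ᵥ A *ᵥ x := by
  have hrw : (fun A : Matrix (Fin N) (Fin N) ℂ => star x ⬝ᵥ A *ᵥ x) =
      fun A => ∑ i, ∑ j, (starRingEnd ℂ) (x i) * (A i j * x j) := by
    funext A
    simp [dotProduct, Matrix.mulVec, Finset.mul_sum]
  rw [hrw]
  refine continuous_finset_sum _ fun i _ => continuous_finset_sum _ fun j _ => ?_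
  exact continuous_const.mul
    ((continuous_id.matrix_elem i j).mul continuous_const)

end GKLSAux

open GKLSAux

/-- Along the controlled GKLS equation, positive definiteness of the state is preserved
in forward time: no singular density matrix (boundary point of the state set) can be
reached in finite time from the interior by coherent control. -/
theorem gkls_preserves_posDef (N : ℕ) (hN : 1 ≤ N) (m p : ℕ)
    (H₀ : Matrix (Fin N) (Fin N) ℂ) (hH₀ : H₀.IsHermitian)
    (Hc : Fin m → Matrix (Fin N) (Fin N) ℂ) (hHc : ∀ j, (Hc j).IsHermitian)
    (L : Fin p → Matrix (Fin N) (Fin N) ℂ)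
    (u : Fin m → ℝ → ℝ) (hu : ∀ j, Continuous (u j))
    (ρ : ℝ → Matrix (Fin N) (Fin N) ℂ)
    (hode : ∀ t : ℝ, HasDerivAt ρ
      (-Complex.I • ((H₀ + ∑ j, (u j t : ℂ) • Hc j) * ρ t -
          ρ t * (H₀ + ∑ j, (u j t : ℂ) • Hc j)) +
        ∑ k, (L k * ρ t * (L k)ᴴ - (1 / 2 : ℂ) • ((L k)ᴴ * L k * ρ t) -
          (1 / 2 : ℂ) • (ρ t * ((L k)ᴴ * L k)))) t)
    (h0 : (ρ 0).PosDef) :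
    ∀ t : ℝ, 0 ≤ t → (ρ t).PosDef := by
  -- the ODE in terms of the generator `F`
  have hodeF : ∀ t, HasDerivAt ρ (F (H₀ + ∑ j, (u j t : ℂ) • Hc j) L (ρ t)) t := by
    intro t
    simp only [F]
    exact hode t
  -- Hermiticity is preserved
  have hherm : ∀ t, 0 ≤ t → (ρ t)ᴴ = ρ t :=
    isHermitian_of_ode hH₀ hHc L hu hodeF h0.isHermitian
  -- continuity of the trajectory
  have hcont : Continuous ρ :=
    continuous_iff_continuousAt.mpr fun t => (hodeF t).continuousAt
  intro t₀ ht₀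
  by_contra hnot
  set Bad : Set ℝ := {t | 0 ≤ t ∧ ¬ (ρ t).PosDef} with hBad
  have hBadne : Bad.Nonempty := ⟨t₀, ht₀, hnot⟩
  have hbdd : BddBelow Bad := ⟨0, fun x hx => hx.1⟩
  set T : ℝ := sInf Bad with hTdef
  have hT0 : 0 ≤ T := le_csInf hBadne fun x hx => hx.1
  have hlt : ∀ s, 0 ≤ s → s < T → (ρ s).PosDef := by
    intro s hs hsT
    by_contra h
    exact absurd (csInf_le hbdd ⟨hs, h⟩) (not_le.mpr hsT)
  -- ρ T is positive definite
  have hTpos : (ρ T).PosDef := by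
    rcases eq_or_lt_of_le hT0 with h | hTlt
    · rw [← h]; exact h0
    -- Hermitian at T
    have hhermT : (ρ T)ᴴ = ρ T := hherm T hT0
    -- positive semidefinite at T by continuity
    have hpsd : (ρ T).PosSemidef := by
      refine .of_dotProduct_mulVec_nonneg hhermT fun x => ?_
      rw [Complex.le_def]
      refine ⟨?_, (quad_im_eq_zero hhermT x).symm⟩
      rw [Complex.zero_re]
      have hf : Continuous fun t => (star x ⬝ᵥ ρ t *ᵥ x).re :=
        Complex.continuous_re.comp ((quad_continuous x).comp hcont)
      have hclos : T ∈ closure (Set.Ico (0:ℝ) T) := by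
        rw [closure_Ico hTlt.ne]
        exact Set.right_mem_Icc.mpr hT0
      have hne : (nhdsWithin T (Set.Ico 0 T)).NeBot :=
        mem_closure_iff_nhdsWithin_neBot.mp hclos
      refine ge_of_tendsto ((hf.continuousWithinAt (s := Set.Ico 0 T) (x := T)).tendsto) ?_
      refine Filter.eventually_of_mem self_mem_nhdsWithin fun s hs => ?_
      have hps := (hlt s hs.1 hs.2).posSemidef.dotProduct_mulVec_nonneg x
      exact (Complex.le_def.mp hps).1
    -- determinant stays bounded below via Grönwall-type monotonicity
    set C : ℝ := ∑ k, ((L k)ᴴ * L k).trace.re with hCdef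
    have hC0 : 0 ≤ C := by
      refine Finset.sum_nonneg fun k _ => ?_
      exact (Complex.le_def.mp
        (trace_nonneg_of_posSemidef (Matrix.posSemidef_conjTranspose_mul_self (L k)))).1
    set g : ℝ → ℝ := fun t => ((ρ t).det).re with hgdef
    set d : ℝ → ℂ := fun t =>
      ∑ i, (updateRow (ρ t) i ((F (H₀ + ∑ j, (u j t : ℂ) • Hc j) L (ρ t)) i)).det with hddef
    have hgderiv : ∀ t, HasDerivAt g ((d t).re) t := fun t =>
      hasDerivAt_re (hasDerivAt_det (hodeF t))
    set φ : ℝ → ℝ := fun t => g t * Real.exp (C * t) with hφdef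
    have hφderiv : ∀ t, HasDerivAt φ
        ((d t).re * Real.exp (C * t) + g t * (Real.exp (C * t) * C)) t := by
      intro t
      have he : HasDerivAt (fun s : ℝ => Real.exp (C * s)) (Real.exp (C * t) * C) t := by
        simpa using ((hasDerivAt_id t).const_mul C).exp
      exact (hgderiv t).mul he
    have hmono : MonotoneOn φ (Set.Icc 0 T) := by
      have hgc : Continuous g := continuous_iff_continuousAt.mpr fun s => (hgderiv s).continuousAt
      have hφc : Continuous φ :=
        hgc.mul (Real.continuous_exp.comp (continuous_const.mul continuous_id))
      refine monotoneOn_of_deriv_nonneg (convex_Icc 0 T) hφc.continuousOn ?_ ?_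
      · intro x _
        exact (hφderiv x).differentiableAt.differentiableWithinAt
      · intro x hx
        rw [interior_Icc] at hx
        rw [(hφderiv x).deriv]
        have hRt : (ρ x).PosDef := hlt x hx.1.le hx.2
        have hdetx : IsUnit (ρ x).det := isUnit_iff_ne_zero.mpr hRt.det_pos.ne'
        have hgx : 0 < g x := (Complex.lt_def.mp hRt.det_pos).1
        have hdet_eq : (ρ x).det = ((g x : ℝ) : ℂ) := by
          apply Complex.ext
          · simp [hgdef]
          · simp [hgdef, ((Complex.lt_def.mp hRt.det_pos).2).symm]
        have hd_eq : (d x).re =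
            ((F (H₀ + ∑ j, (u j x : ℂ) • Hc j) L (ρ x) * (ρ x)⁻¹).trace).re * g x := by
          rw [hddef]
          simp only
          rw [sum_det_updateRow _ _ hdetx, hdet_eq, mul_comm, Complex.re_ofReal_mul]
          ring
        have htr := re_trace_F_mul_inv (Hm := H₀ + ∑ j, (u j x : ℂ) • Hc j) L hRt
        have hd_ge : -(C * g x) ≤ (d x).re := by
          rw [hd_eq, hCdef]
          have h5 := mul_le_mul_of_nonneg_right htr hgx.le
          linarith
        have hexp : 0 < Real.exp (C * x) := Real.exp_pos _
        nlinarith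
    have hφ0 : 0 < φ 0 := by
      have : 0 < g 0 := (Complex.lt_def.mp h0.det_pos).1
      simp only [hφdef, mul_zero, Real.exp_zero, mul_one]
      simpa using this
    have hgT : 0 < g T := by
      have h1 := hmono (Set.left_mem_Icc.mpr hT0) (Set.right_mem_Icc.mpr hT0) hT0
      have hexp : 0 < Real.exp (C * T) := Real.exp_pos _
      by_contra h
      push_neg at h
      have : φ T ≤ 0 := mul_nonpos_of_nonpos_of_nonneg h hexp.le
      linarith
    have hdetne : (ρ T).det ≠ 0 := by
      intro h
      have hz : g T = ((ρ T).det).re := rfl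
      rw [h, Complex.zero_re] at hz
      exact hgT.ne' hz
    exact posDef_of_posSemidef_det_ne_zero hpsd hdetne
  -- positive definiteness persists slightly beyond T, contradicting T = sInf Bad
  obtain ⟨ε, hε, hnbhd⟩ := exists_posDef_nbhd hTpos hN
  obtain ⟨δ, hδ, hδball⟩ := Metric.continuousAt_iff.mp hcont.continuousAt ε hε
  obtain ⟨b, hbBad, hbδ⟩ := (csInf_lt_iff hbdd hBadne).mp
    (show sInf Bad < T + δ by rw [← hTdef]; linarith)
  rcases lt_or_ge b T with hbT | hbT
  · exact hbBad.2 (hlt b hbBad.1 hbT)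
  · refine hbBad.2 (hnbhd _ (hherm b hbBad.1) ?_)
    have : dist b T < δ := by
      rw [Real.dist_eq, abs_of_nonneg (by linarith)]
      linarith
    have := hδball this
    rwa [dist_eq_norm] at this
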